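/- The elliptic multiple-cover formula for O(-1)⊕O(-1) over ℂP¹: combining (1/2)[(R₊₊ - c₋₁⁺/12)du₊ + (R₋₋ - c₋₁⁻/12)du₋] = (1/2)(1/8 + 1/(8(1-q))) d log q with (1/48) d log(Δ₊Δ₋) = (1/48)·q(1-q)⁻¹ d log q gives dG = (1/8 + q/(12(1-q))) d log q; in particular the q-dependent part is d log(1-q)^{-1/12}, giving the contribution -(1/12)log(1-Q^D) of degree D rational curves and their multiple covers to the genus 1 GW potential of а Calabi–Yau 3-fold. -/

import Mathlib

/- Elliptic multiple-cover formula for O(-1)⊕O(-1) over ℂP¹: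
(1/2)[(R₊₊ + 1/(8λ))·λ(1-q)^{-1/2} + (R₋₋ - 1/(8λ))·(-λ(1-q)^{-1/2})]
  + (1/48)·q/(1-q) = 1/8 + q/(12(1-q)),
and the q-dependent part is d log(1-q)^{-1/12}:
q·d/dq[-(1/12)log(1-q)] = q/(12(1-q)). -/
theorem stmt15 (l : ℝ) (hl : l ≠ 0) (q : ℝ) (hq : 0 < 1 - q)
    (Rpp Rmm : ℝ)
    (hRpp : Rpp = Real.sqrt (1 - q) / (16 * l)
      + 1 / (16 * l * Real.sqrt (1 - q)) - 1 / (8 * l))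
    (hRmm : Rmm = -Rpp) :
    (1 / 2) * ((Rpp + 1 / (8 * l)) * (l / Real.sqrt (1 - q))
        + (Rmm - 1 / (8 * l)) * (-(l / Real.sqrt (1 - q))))
      + (1 / 48) * (q / (1 - q))
      = 1 / 8 + q / (12 * (1 - q)) ∧
    q * deriv (fun s => -(1 / 12) * Real.log (1 - s)) q = q / (12 * (1 - q)) := by
  have hs : Real.sqrt (1 - q) > 0 := Real.sqrt_pos.mpr hq
  have hs2 : Real.sqrt (1 - q) ^ 2 = 1 - q := Real.sq_sqrt hq.le
  constructor
  · subst hRmm hRpp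
    set s := Real.sqrt (1 - q) with hsdef
    rw [← hs2]
    field_simp
    linear_combination (-9216) * hs2
  · have hd : HasDerivAt (fun s : ℝ => -(1 / 12) * Real.log (1 - s))
        (-(1 / 12) * (-1 / (1 - q))) q := by
      exact (((hasDerivAt_id q).const_sub 1).log hq.ne').const_mul _
    rw [hd.deriv]
    field_simp
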